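/- The function R(t) = R_1(t) - \frac{1}{8\sqrt{t}+t\sqrt{t}}I_{[t>1]} is integrable on (0,\infty), where R_1(t) \sim \frac{1}{2t^{3/2}} at infinity and R_1(t) extends continuously to t=0. -/

import Mathlib

set_option maxHeartbeats 1000000

open Real Set MeasureTheory

noncomputable def R1 (t : ℝ) : ℝ :=
  Real.sqrt ((4 * t - 15) * Real.exp (4 * t) + (24 * t + 32) * Real.exp (3 * t)
      - (8 * t ^ 3 + 12 * t ^ 2 + 36 * t + 18) * Real.exp (2 * t)
      + 8 * t * Real.exp t + 1) /
    (2 * t * (2 * t * Real.exp (2 * t) - 3 * Real.exp (2 * t) + 4 * Real.exp t - 1))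

lemma expb {x : ℝ} (hx : |x| ≤ 1) :
    |Real.exp x - (1 + x + x^2/2 + x^3/6 + x^4/24 + x^5/120 + x^6/720 + x^7/5040)|
      ≤ x^8 * (9/322560) := by
  have h := Real.exp_bound hx (n := 8) (by norm_num)
  have hx8 : |x|^8 = x^8 := by
    rw [← abs_pow, abs_of_nonneg (by positivity)]
  simp only [Finset.sum_range_succ, Finset.sum_range_zero] at h
  norm_num [Nat.factorial] at h ⊢
  rw [hx8] at h
  convert h using 2

noncomputable def hh (t : ℝ) : ℝ := 2*t - 3 + 4*Real.exp (-t) - Real.exp (-(2*t))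

lemma hh_deriv (t : ℝ) :
    HasDerivAt hh (2 - 4*Real.exp (-t) + 2*Real.exp (-(2*t))) t := by
  have h1 : HasDerivAt (fun s : ℝ => Real.exp (-s)) (-Real.exp (-t)) t := by
    simpa [Function.comp_def] using (Real.hasDerivAt_exp (-t)).comp t ((hasDerivAt_id t).neg)
  have h2 : HasDerivAt (fun s : ℝ => Real.exp (-(2*s))) (-2*Real.exp (-(2*t))) t := by
    have := (Real.hasDerivAt_exp (-(2*t))).comp t (((hasDerivAt_id t).const_mul 2).neg)
    simpa [Function.comp_def] using this.congr_deriv (by ring)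
  have h := ((((hasDerivAt_id t).const_mul 2).sub_const 3).add (h1.const_mul 4)).sub h2
  have he : hh = fun t => 2 * t - 3 + 4 * Real.exp (-t) - Real.exp (-(2*t)) := rfl
  rw [he]
  convert h using 1
  · rfl
  · rfl
  · rfl
  ring

lemma hh_pos {t : ℝ} (ht : 0 < t) : 0 < hh t := by
  have mono : StrictMonoOn hh (Set.Ici 0) := by
    apply strictMonoOn_of_deriv_pos (convex_Ici 0)
    · have : Continuous hh := by
        unfold hh; continuity
      exact this.continuousOn
    · intro x hx
      rw [interior_Ici] at hx
      rw [(hh_deriv x).deriv]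
      have h1 : Real.exp (-x) < 1 := Real.exp_lt_one_iff.2 (by linarith [hx.out])
      have h2 : Real.exp (-(2*x)) = Real.exp (-x) * Real.exp (-x) := by
        rw [← Real.exp_add]; ring_nf
      nlinarith [Real.exp_pos (-x)]
  have h0 : hh 0 = 0 := by norm_num [hh]
  have := mono (Set.self_mem_Ici) (Set.mem_Ici.2 ht.le) ht
  linarith [h0 ▸ this]

lemma D_eq (t : ℝ) :
    2*t*Real.exp (2*t) - 3*Real.exp (2*t) + 4*Real.exp t - 1 = Real.exp (2*t) * hh t := by
  have e1 : Real.exp (2*t) * Real.exp (-t) = Real.exp t := by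
    rw [← Real.exp_add]; ring_nf
  have e2 : Real.exp (2*t) * Real.exp (-(2*t)) = 1 := by
    rw [← Real.exp_add]; simp
  unfold hh
  linear_combination (-4) * e1 + e2

lemma D_pos {t : ℝ} (ht : 0 < t) :
    0 < 2*t*Real.exp (2*t) - 3*Real.exp (2*t) + 4*Real.exp t - 1 := by
  rw [D_eq]
  exact mul_pos (Real.exp_pos _) (hh_pos ht)

lemma hh_lb {t : ℝ} (ht : 0 < t) (ht4 : t ≤ 1/4) : t^3/3 ≤ hh t := by
  have b1 := (abs_le.1 (expb (x := -t) (by rw [abs_of_nonpos (by linarith)]; linarith))).1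
  have b2 := (abs_le.1 (expb (x := -(2*t)) (by rw [abs_of_nonpos (by linarith)]; linarith))).2
  unfold hh
  have p1 : t * t^3 ≤ (1/4) * t^3 :=
    mul_le_mul_of_nonneg_right ht4 (by positivity)
  have p2 : t^2 * t^3 ≤ (1/4)^2 * t^3 :=
    mul_le_mul_of_nonneg_right (pow_le_pow_left₀ ht.le ht4 2) (by positivity)
  have p3 : t^3 * t^3 ≤ (1/4)^3 * t^3 :=
    mul_le_mul_of_nonneg_right (pow_le_pow_left₀ ht.le ht4 3) (by positivity)
  have p4 : t^4 * t^3 ≤ (1/4)^4 * t^3 :=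
    mul_le_mul_of_nonneg_right (pow_le_pow_left₀ ht.le ht4 4) (by positivity)
  have p5 : t^5 * t^3 ≤ (1/4)^5 * t^3 :=
    mul_le_mul_of_nonneg_right (pow_le_pow_left₀ ht.le ht4 5) (by positivity)
  nlinarith [b1, b2, pow_pos ht 3, p1, p2, p3, p4, p5]

lemma P_le {t : ℝ} (ht : 0 < t) (ht4 : t ≤ 1/4) :
    (4 * t - 15) * Real.exp (4 * t) + (24 * t + 32) * Real.exp (3 * t)
      - (8 * t ^ 3 + 12 * t ^ 2 + 36 * t + 18) * Real.exp (2 * t)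
      + 8 * t * Real.exp t + 1 ≤ 60 * t ^ 7 := by
  have b4 := abs_le.1 (expb (x := 4*t) (by rw [abs_of_nonneg (by linarith)]; linarith))
  have b3 := abs_le.1 (expb (x := 3*t) (by rw [abs_of_nonneg (by linarith)]; linarith))
  have b2 := abs_le.1 (expb (x := 2*t) (by rw [abs_of_nonneg (by linarith)]; linarith))
  have b1 := abs_le.1 (expb (x := t) (by rw [abs_of_nonneg (by linarith)]; linarith))
  have t4 : (4*t - 15) * Real.exp (4*t) ≤
      (4*t - 15) * ((1 + 4*t + (4*t)^2/2 + (4*t)^3/6 + (4*t)^4/24 + (4*t)^5/120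
        + (4*t)^6/720 + (4*t)^7/5040) - (4*t)^8 * (9/322560)) :=
    mul_le_mul_of_nonpos_left (by linarith [b4.1]) (by linarith)
  have t3 : (24*t + 32) * Real.exp (3*t) ≤
      (24*t + 32) * ((1 + 3*t + (3*t)^2/2 + (3*t)^3/6 + (3*t)^4/24 + (3*t)^5/120
        + (3*t)^6/720 + (3*t)^7/5040) + (3*t)^8 * (9/322560)) :=
    mul_le_mul_of_nonneg_left (by linarith [b3.2]) (by linarith)
  have t2 : (-(8 * t ^ 3 + 12 * t ^ 2 + 36 * t + 18)) * Real.exp (2*t) ≤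
      (-(8 * t ^ 3 + 12 * t ^ 2 + 36 * t + 18)) * ((1 + 2*t + (2*t)^2/2 + (2*t)^3/6
        + (2*t)^4/24 + (2*t)^5/120 + (2*t)^6/720 + (2*t)^7/5040) - (2*t)^8 * (9/322560)) :=
    mul_le_mul_of_nonpos_left (by linarith [b2.1]) (by nlinarith)
  have t1 : (8*t) * Real.exp t ≤
      (8*t) * ((1 + t + t^2/2 + t^3/6 + t^4/24 + t^5/120 + t^6/720 + t^7/5040)
        + t^8 * (9/322560)) :=
    mul_le_mul_of_nonneg_left (by linarith [b1.2]) (by linarith)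
  have p1 : t^8 ≤ (1/4) * t^7 := by
    have := mul_le_mul_of_nonneg_right ht4 (pow_nonneg ht.le 7)
    nlinarith
  have p4 : t^11 ≤ (1/256) * t^7 := by
    have h4 : t^4 ≤ (1/4)^4 := pow_le_pow_left₀ ht.le ht4 4
    have := mul_le_mul_of_nonneg_right h4 (pow_nonneg ht.le 7)
    nlinarith
  have q9 : (0:ℝ) ≤ t^9 := by positivity
  have q10 : (0:ℝ) ≤ t^10 := by positivity
  have q7 : (0:ℝ) ≤ t^7 := by positivity
  linarith [t4, t3, t2, t1, p1, p4, q9, q10, q7]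

lemma R1_nonneg {t : ℝ} (ht : 0 < t) : 0 ≤ R1 t := by
  unfold R1
  exact div_nonneg (Real.sqrt_nonneg _)
    (le_of_lt (mul_pos (by linarith) (D_pos ht)))

lemma R1_meas : Measurable R1 := by
  unfold R1
  apply Measurable.div
  · exact (Real.continuous_sqrt.comp (by continuity)).measurable
  · exact (by continuity : Continuous fun t : ℝ =>
      2 * t * (2 * t * Real.exp (2 * t) - 3 * Real.exp (2 * t) + 4 * Real.exp t - 1)).measurable

lemma R1_small {t : ℝ} (ht : 0 < t) (ht4 : t ≤ 1/4) : R1 t ≤ 12 / Real.sqrt t := by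
  unfold R1
  have hs : Real.sqrt t > 0 := Real.sqrt_pos.2 ht
  have hP : (4 * t - 15) * Real.exp (4 * t) + (24 * t + 32) * Real.exp (3 * t)
      - (8 * t ^ 3 + 12 * t ^ 2 + 36 * t + 18) * Real.exp (2 * t)
      + 8 * t * Real.exp t + 1 ≤ (8*t^3)^2 * t := by
    have := P_le ht ht4
    nlinarith [pow_nonneg ht.le 7]
  have hsq : Real.sqrt ((4 * t - 15) * Real.exp (4 * t) + (24 * t + 32) * Real.exp (3 * t)
      - (8 * t ^ 3 + 12 * t ^ 2 + 36 * t + 18) * Real.exp (2 * t)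
      + 8 * t * Real.exp t + 1) ≤ 8*t^3 * Real.sqrt t := by
    calc Real.sqrt _ ≤ Real.sqrt ((8*t^3)^2 * t) := Real.sqrt_le_sqrt hP
    _ = 8*t^3 * Real.sqrt t := by
        rw [Real.sqrt_mul (by positivity), Real.sqrt_sq (by positivity)]
  have hden : (2:ℝ)/3 * t^4 ≤
      2 * t * (2 * t * Real.exp (2 * t) - 3 * Real.exp (2 * t) + 4 * Real.exp t - 1) := by
    have h1 : t^3/3 ≤ hh t := hh_lb ht ht4
    have h2 : (1:ℝ) ≤ Real.exp (2*t) := Real.one_le_exp (by linarith)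
    have h3 : Real.exp (2*t) * (t^3/3) ≤ Real.exp (2*t) * hh t :=
      mul_le_mul_of_nonneg_left h1 (Real.exp_pos _).le
    rw [D_eq]
    have h4 : (1:ℝ) * (t^3/3) ≤ Real.exp (2*t) * (t^3/3) :=
      mul_le_mul_of_nonneg_right h2 (by positivity)
    nlinarith [h3, h4]
  have hdpos : (0:ℝ) < 2/3 * t^4 := by positivity
  calc _ ≤ (8*t^3 * Real.sqrt t) / ((2:ℝ)/3 * t^4) :=
        div_le_div₀ (by positivity) hsq hdpos hden
  _ = 12 / Real.sqrt t := by
      rw [div_eq_div_iff (by positivity) hs.ne']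
      have := Real.mul_self_sqrt ht.le
      nlinarith [this]

lemma rp_half {t : ℝ} (ht : 0 < t) : t ^ (-(1/2) : ℝ) = 1 / Real.sqrt t := by
  rw [Real.rpow_neg ht.le, ← Real.sqrt_eq_rpow, one_div]

lemma rp_3half {t : ℝ} (ht : 0 < t) : t ^ (-(3/2) : ℝ) = 1 / (t * Real.sqrt t) := by
  rw [Real.rpow_neg ht.le, one_div]
  congr 1
  rw [show (3/2 : ℝ) = 1 + 1/2 by norm_num, Real.rpow_add ht, Real.rpow_one,
    ← Real.sqrt_eq_rpow]

-- the subtracted indicator term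
noncomputable def ww (t : ℝ) : ℝ :=
  if 1 ≤ t then 1 / (8 * Real.sqrt t + t * Real.sqrt t) else 0

lemma ww_meas : Measurable ww := by
  unfold ww
  apply Measurable.ite (measurableSet_le measurable_const measurable_id)
  · exact (measurable_const.div
      (((measurable_const.mul Real.continuous_sqrt.measurable).add
        (measurable_id.mul Real.continuous_sqrt.measurable))))
  · exact measurable_const

lemma ww_bound (t : ℝ) : 0 ≤ ww t ∧ ww t ≤ 1/8 := by
  unfold ww
  split_ifs with h
  · have h1 : (1:ℝ) ≤ Real.sqrt t := by
      rw [show (1:ℝ) = Real.sqrt 1 by simp]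
      exact Real.sqrt_le_sqrt h
    have h0 : 0 ≤ t := by linarith
    have h2 : (8:ℝ) ≤ 8 * Real.sqrt t + t * Real.sqrt t := by
      nlinarith [Real.sqrt_nonneg t]
    constructor
    · positivity
    · rw [div_le_div_iff₀ (by linarith) (by norm_num)]
      linarith
  · norm_num

lemma part1 : IntegrableOn (fun t : ℝ => R1 t - ww t) (Set.Ioc 0 3) := by
  -- bound on [1/4, 3]
  have hcont : ContinuousOn R1 (Set.Icc (1/4 : ℝ) 3) := by
    unfold R1
    apply ContinuousOn.div
    · exact (Real.continuous_sqrt.comp (by continuity)).continuousOn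
    · exact (by continuity : Continuous fun t : ℝ =>
        2 * t * (2 * t * Real.exp (2 * t) - 3 * Real.exp (2 * t) + 4 * Real.exp t - 1)).continuousOn
    · intro x hx
      have hx0 : (0:ℝ) < x := by linarith [hx.1]
      exact ne_of_gt (mul_pos (by linarith) (D_pos hx0))
  obtain ⟨M, hM⟩ := isCompact_Icc.exists_bound_of_continuousOn hcont
  set A : ℝ := 12 + 2 * max M 0 with hA
  have hA12 : (12:ℝ) ≤ A := by
    have := le_max_right M 0
    simp only [hA]
    linarith [le_max_right M (0:ℝ)]
  have hApos : (0:ℝ) < A := by linarith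
  -- integrable dominating function
  have hgint : IntegrableOn (fun t : ℝ => A * t ^ (-(1/2) : ℝ)) (Set.Ioc 0 3) := by
    have h := (intervalIntegral.intervalIntegrable_rpow' (r := -(1/2))
      (by norm_num) (a := 0) (b := 3)).1
    exact h.const_mul A
  have hR1int : IntegrableOn R1 (Set.Ioc 0 3) := by
    apply Integrable.mono' hgint (R1_meas.aestronglyMeasurable)
    rw [ae_restrict_iff' measurableSet_Ioc]
    filter_upwards with t ht
    obtain ⟨ht0, ht3⟩ := ht
    have hs : Real.sqrt t > 0 := Real.sqrt_pos.2 ht0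
    rw [Real.norm_eq_abs, abs_of_nonneg (R1_nonneg ht0), rp_half ht0]
    rcases le_or_gt t (1/4) with hc | hc
    · calc R1 t ≤ 12 / Real.sqrt t := R1_small ht0 hc
      _ ≤ A * (1 / Real.sqrt t) := by
          rw [mul_one_div]
          gcongr
    · have hsle : Real.sqrt t ≤ 2 := by
        nlinarith [Real.sq_sqrt ht0.le, Real.sqrt_nonneg t]
      have h1 : R1 t ≤ M := by
        have := hM t ⟨hc.le, ht3⟩
        rw [Real.norm_eq_abs, abs_of_nonneg (R1_nonneg ht0)] at this
        exact this
      have h2 : M ≤ max M 0 := le_max_left M 0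
      have h3 : A / 2 ≤ A / Real.sqrt t :=
        div_le_div_of_nonneg_left hApos.le hs hsle
      have h4 : max M 0 ≤ A / 2 := by
        rw [hA]; rw [le_div_iff₀ (by norm_num)]
        nlinarith [le_max_right M (0:ℝ)]
      rw [mul_one_div]
      linarith
  have hwint : IntegrableOn ww (Set.Ioc 0 3) := by
    have hconst : IntegrableOn (fun _ : ℝ => (1/8 : ℝ)) (Set.Ioc 0 3) :=
      integrableOn_const measure_Ioc_lt_top.ne
    apply Integrable.mono' hconst (ww_meas.aestronglyMeasurable)
    filter_upwards with t
    rw [Real.norm_eq_abs, abs_of_nonneg (ww_bound t).1]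
    exact (ww_bound t).2
  exact hR1int.sub hwint

lemma part2 : IntegrableOn (fun t : ℝ => R1 t - ww t) (Set.Ioi 3) := by
  have hgint : IntegrableOn (fun t : ℝ => 5 * t ^ (-(3/2) : ℝ)) (Set.Ioi 3) := by
    exact (integrableOn_Ioi_rpow_of_lt (by norm_num) (by norm_num : (0:ℝ) < 3)).const_mul 5
  apply Integrable.mono' hgint ((R1_meas.sub ww_meas).aestronglyMeasurable)
  rw [ae_restrict_iff' measurableSet_Ioi]
  filter_upwards with t ht
  have ht3 : (3:ℝ) < t := ht
  have ht0 : (0:ℝ) < t := by linarith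
  have hs : Real.sqrt t > 0 := Real.sqrt_pos.2 ht0
  have hts : 0 < t * Real.sqrt t := by positivity
  -- bound on ww
  have hw1 : ww t = 1 / (8 * Real.sqrt t + t * Real.sqrt t) := if_pos (by linarith)
  have hw2 : ww t ≤ 1 / (t * Real.sqrt t) := by
    rw [hw1]
    apply one_div_le_one_div_of_le hts
    nlinarith [Real.sqrt_nonneg t]
  have hw0 : 0 ≤ ww t := (ww_bound t).1
  -- bound on R1
  have hP : (4 * t - 15) * Real.exp (4 * t) + (24 * t + 32) * Real.exp (3 * t)
      - (8 * t ^ 3 + 12 * t ^ 2 + 36 * t + 18) * Real.exp (2 * t)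
      + 8 * t * Real.exp t + 1 ≤ 49 * t * Real.exp (4*t) := by
    have he34 : Real.exp (3*t) ≤ Real.exp (4*t) := Real.exp_le_exp.2 (by linarith)
    have he14 : Real.exp t ≤ Real.exp (4*t) := Real.exp_le_exp.2 (by linarith)
    have he04 : (1:ℝ) ≤ Real.exp (4*t) := Real.one_le_exp (by linarith)
    have hneg : 0 ≤ (8 * t ^ 3 + 12 * t ^ 2 + 36 * t + 18) * Real.exp (2 * t) := by positivity
    have m3 : (24*t + 32) * Real.exp (3*t) ≤ (24*t + 32) * Real.exp (4*t) :=
      mul_le_mul_of_nonneg_left he34 (by linarith)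
    have m1 : (8*t) * Real.exp t ≤ (8*t) * Real.exp (4*t) :=
      mul_le_mul_of_nonneg_left he14 (by linarith)
    have mfin : (36*t + 18) * Real.exp (4*t) ≤ 49 * t * Real.exp (4*t) :=
      mul_le_mul_of_nonneg_right (by linarith) (Real.exp_pos _).le
    nlinarith [Real.exp_pos (4*t)]
  have e24 : Real.exp (4*t) = Real.exp (2*t) * Real.exp (2*t) := by
    rw [← Real.exp_add]; ring_nf
  have hsq : Real.sqrt ((4 * t - 15) * Real.exp (4 * t) + (24 * t + 32) * Real.exp (3 * t)
      - (8 * t ^ 3 + 12 * t ^ 2 + 36 * t + 18) * Real.exp (2 * t)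
      + 8 * t * Real.exp t + 1) ≤ 7 * Real.exp (2*t) * Real.sqrt t := by
    calc Real.sqrt _ ≤ Real.sqrt (49 * t * Real.exp (4*t)) := Real.sqrt_le_sqrt hP
    _ = 7 * Real.exp (2*t) * Real.sqrt t := by
        rw [show 49 * t * Real.exp (4*t) = (7 * Real.exp (2*t))^2 * t by rw [e24]; ring,
          Real.sqrt_mul (by positivity), Real.sqrt_sq (by positivity)]
  have hhge : t ≤ hh t := by
    unfold hh
    have h1 : Real.exp (-(2*t)) ≤ Real.exp (-t) := Real.exp_le_exp.2 (by linarith)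
    have h2 : Real.exp (-t) ≤ 1 := Real.exp_le_one_iff.2 (by linarith)
    nlinarith [Real.exp_pos (-t)]
  have hden : 2 * t * (t * Real.exp (2*t)) ≤
      2 * t * (2 * t * Real.exp (2 * t) - 3 * Real.exp (2 * t) + 4 * Real.exp t - 1) := by
    rw [D_eq]
    have := mul_le_mul_of_nonneg_left hhge (Real.exp_pos (2*t)).le
    nlinarith [this]
  have hdpos : 0 < 2 * t * (t * Real.exp (2*t)) := by positivity
  have hR1le : R1 t ≤ 4 / (t * Real.sqrt t) := by
    unfold R1
    calc _ ≤ (7 * Real.exp (2*t) * Real.sqrt t) / (2 * t * (t * Real.exp (2*t))) :=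
          div_le_div₀ (by positivity) hsq hdpos hden
    _ ≤ 4 / (t * Real.sqrt t) := by
        rw [div_le_div_iff₀ (by positivity) hts]
        have hss := Real.mul_self_sqrt ht0.le
        have hep := Real.exp_pos (2*t)
        nlinarith [hss, hep, mul_pos ht0 ht0]
  have hR10 : 0 ≤ R1 t := R1_nonneg ht0
  rw [Real.norm_eq_abs, rp_3half ht0, Pi.sub_apply]
  rw [abs_le]
  constructor
  · have : 1 / (t * Real.sqrt t) ≤ 5 * (1 / (t * Real.sqrt t)) := by
      nlinarith [one_div_pos.2 hts]
    linarith
  · have : (4:ℝ) / (t * Real.sqrt t) ≤ 5 * (1 / (t * Real.sqrt t)) := by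
      rw [mul_one_div]
      gcongr
      norm_num
    linarith

theorem stmt18 :
    MeasureTheory.IntegrableOn
      (fun t : ℝ => R1 t -
        (if 1 ≤ t then 1 / (8 * Real.sqrt t + t * Real.sqrt t) else 0))
      (Set.Ioi 0) := by
  have hu : Set.Ioc (0:ℝ) 3 ∪ Set.Ioi 3 = Set.Ioi 0 :=
    Set.Ioc_union_Ioi_eq_Ioi (by norm_num)
  rw [← hu]
  have h12 : IntegrableOn (fun t : ℝ => R1 t - ww t) (Set.Ioc 0 3 ∪ Set.Ioi 3) :=
    part1.union part2
  exact h12
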